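/- Let q be a prime power and let C ⊆ 𝔽_q^{n×m} be a rank-metric code of dimension k ≥ 2. Then for every integer r with 1 ≤ r ≤ k − 1 one has d_r(C) < d_{r+1}(C). -/

import Mathlib

open Matrix Submodule Module

lemma rank_stdBasisMatrix_one {F : Type*} [Field F] {n m : ℕ}
    (i : Fin n) (j : Fin m) : (Matrix.single i j (1 : F)).rank = 1 := by
  have hr : LinearMap.range (Matrix.single i j (1 : F)).mulVecLin
      = Submodule.span F {(Pi.single i (1 : F) : Fin n → F)} := by
    apply le_antisymm
    · rintro _ ⟨x, rfl⟩
      have : (Matrix.single i j (1 : F)).mulVecLin x = x j • (Pi.single i (1 : F) : Fin n → F) := by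
        rw [mulVecLin_apply, single_mulVec]
        ext a
        rcases eq_or_ne a i with rfl | h
        · simp
        · simp [Function.update_of_ne h, Pi.single_eq_of_ne h]
      rw [this]
      exact Submodule.smul_mem _ _ (Submodule.mem_span_singleton_self _)
    · rw [Submodule.span_le, Set.singleton_subset_iff]
      refine ⟨Pi.single j 1, ?_⟩
      rw [mulVecLin_apply, single_mulVec]
      ext a
      rcases eq_or_ne a i with rfl | h
      · simp
      · simp [Function.update_of_ne h, Pi.single_eq_of_ne h]
  rw [Matrix.rank, hr, finrank_span_singleton]
  intro h
  have := congrFun h i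
  simp at this


lemma span_rankOne_top {F : Type*} [Field F] {n m : ℕ} :
    ∃ S : Set (Matrix (Fin n) (Fin m) F), (∀ M ∈ S, M.rank = 1) ∧
      (⊤ : Submodule F (Matrix (Fin n) (Fin m) F)) = Submodule.span F S := by
  refine ⟨Set.range (fun p : Fin n × Fin m => Matrix.single p.1 p.2 (1 : F)), ?_, ?_⟩
  · rintro _ ⟨⟨i, j⟩, rfl⟩
    exact rank_stdBasisMatrix_one i j
  · refine le_antisymm (fun x _ => ?_) le_top
    rw [matrix_eq_sum_single x]
    apply Submodule.sum_mem
    intro i _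
    apply Submodule.sum_mem
    intro j _
    have : Matrix.single i j (x i j) = x i j • Matrix.single i j (1 : F) := by
      rw [smul_single, smul_eq_mul, mul_one]
    rw [this]
    exact Submodule.smul_mem _ _ (Submodule.subset_span ⟨(i, j), rfl⟩)


/-- The `r`-th generalized tensor rank of a rank-metric code `C`: the least dimension
of a subspace `U` spanned by rank-one matrices with `dim(C ⊓ U) ≥ r`. -/
noncomputable def genTensorRank {F : Type*} [Field F] {n m : ℕ}
    (C : Submodule F (Matrix (Fin n) (Fin m) F)) (r : ℕ) : ℕ :=
  sInf {s : ℕ | ∃ U : Submodule F (Matrix (Fin n) (Fin m) F),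
    (∃ S : Set (Matrix (Fin n) (Fin m) F), (∀ M ∈ S, M.rank = 1) ∧
      U = Submodule.span F S) ∧
    r ≤ Module.finrank F ↥(C ⊓ U) ∧ Module.finrank F ↥U = s}

/-- The generalized tensor ranks of a rank-metric code of dimension `k ≥ 2` are
strictly increasing: `d_r(C) < d_{r+1}(C)` for `1 ≤ r ≤ k - 1`. -/
theorem genTensorRank_strictMono {F : Type*} [Field F] [Fintype F] {n m : ℕ}
    (C : Submodule F (Matrix (Fin n) (Fin m) F)) (hk : 2 ≤ Module.finrank F C) :
    ∀ r : ℕ, 1 ≤ r → r ≤ Module.finrank F C - 1 →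
      genTensorRank C r < genTensorRank C (r + 1) := by
  intro r hr1 hrk
  classical
  set P := fun s : ℕ => ∃ U : Submodule F (Matrix (Fin n) (Fin m) F),
    (∃ S : Set (Matrix (Fin n) (Fin m) F), (∀ M ∈ S, M.rank = 1) ∧
      U = Submodule.span F S) ∧
    (r + 1) ≤ Module.finrank F ↥(C ⊓ U) ∧ Module.finrank F ↥U = s with hP
  have hne : {s : ℕ | P s}.Nonempty := by
    refine ⟨Module.finrank F (⊤ : Submodule F (Matrix (Fin n) (Fin m) F)),
      ⊤, span_rankOne_top, ?_, rfl⟩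
    rw [inf_top_eq]
    omega
  have hmem : P (sInf {s : ℕ | P s}) := Nat.sInf_mem hne
  obtain ⟨U, ⟨S, hS, hUspan⟩, hCU, hUd⟩ := hmem
  set d := sInf {s : ℕ | P s} with hd
  -- extract a linearly independent subset of S spanning U
  obtain ⟨T, hTS, hTspan, hTli⟩ := exists_linearIndependent F S
  have hTfin : T.Finite := hTli.setFinite
  haveI : Fintype T := hTfin.fintype
  have hTcard : T.toFinset.card = d := by
    rw [← hUd, hUspan, ← hTspan]
    exact (finrank_span_set_eq_card hTli).symm
  have hd1 : 1 ≤ d := by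
    have h1 : Module.finrank F ↥(C ⊓ U) ≤ Module.finrank F ↥U :=
      Submodule.finrank_mono inf_le_right
    omega
  -- pick an element to remove
  have hTne : T.toFinset.Nonempty := by
    rw [← Finset.card_pos, hTcard]; omega
  obtain ⟨M₀, hM₀⟩ := hTne
  rw [Set.mem_toFinset] at hM₀
  set T' : Set (Matrix (Fin n) (Fin m) F) := T \ {M₀} with hT'
  set U' : Submodule F (Matrix (Fin n) (Fin m) F) := Submodule.span F T' with hU'
  have hT'fin : T'.Finite := hTfin.subset Set.diff_subset
  haveI : Fintype T' := hT'fin.fintype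
  have hT'li : LinearIndependent F ((↑) : T' → Matrix (Fin n) (Fin m) F) :=
    LinearIndepOn.mono (v := id) hTli Set.diff_subset
  have hT'card : T'.toFinset.card = d - 1 := by
    have : T'.toFinset = T.toFinset.erase M₀ := by
      ext x; simp [hT', Set.mem_toFinset, and_comm]
    rw [this, Finset.card_erase_of_mem (Set.mem_toFinset.mpr hM₀), hTcard]
  have hU'rank : Module.finrank F ↥U' = d - 1 := by
    rw [hU']
    rw [finrank_span_set_eq_card hT'li, hT'card]
  have hU'le : U' ≤ U := by
    rw [hU', hUspan, ← hTspan]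
    exact Submodule.span_mono Set.diff_subset
  -- dimension drop at most one
  have hdrop : r ≤ Module.finrank F ↥(C ⊓ U') := by
    have hsum := Submodule.finrank_sup_add_finrank_inf_eq (C ⊓ U) U'
    have hle1 : Module.finrank F ↥((C ⊓ U) ⊔ U') ≤ d := by
      rw [← hUd]
      exact Submodule.finrank_mono (sup_le inf_le_right hU'le)
    have heq : C ⊓ U' = (C ⊓ U) ⊓ U' := by
      rw [inf_assoc, inf_eq_right.mpr hU'le]
    rw [heq]
    omega
  -- conclude
  have hle : genTensorRank C r ≤ d - 1 :=
    Nat.sInf_le ⟨U', ⟨T', fun M hM => hS M (hTS hM.1), rfl⟩, hdrop, hU'rank⟩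
  have : genTensorRank C (r + 1) = d := rfl
  omega
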